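/- Let S be an arc of F_q^k with |S| ≥ k and a fixed linear order, and let t = q+k−1−|S| ≥ 0. Then there exist nonzero scalars α_C ∈ F_q, one for each subset C of S of size k−1, such that for every subset E of S of size k+t and every subset A of E of size k−2, Σ_C α_C · ∏_{u ∈ E∖C} det(u, C)^{−1} = 0, where the sum runs over the subsets C of E of size k−1 containing A (each det(u,C) is nonzero since S is an arc). -/

import Mathlib

open Finset

variable {F : Type*} [Field F]

/-- An *arc*: every `k`-subset is a set of linearly independent vectors
(hence a basis of `F^k`). -/
def IsArc {k : ℕ} (S : Set (Fin k → F)) : Prop :=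
  ∀ T : Finset (Fin k → F), ↑T ⊆ S → T.card = k →
    LinearIndependent F (Subtype.val : {x // x ∈ T} → (Fin k → F))

/-- The *weight* of a vector: its number of nonzero coordinates. -/
noncomputable def weight {ι : Type*} (w : ι → F) : ℕ := Nat.card {i // w i ≠ 0}

/-- `det(u, C)`: the determinant of the `k × k` matrix whose first row is `u` and whose
remaining rows are the vectors `g i`, `i ∈ C`, listed in increasing order of the index set. -/
noncomputable def detWith {k m : ℕ} (g : Fin m → Fin k → F)
    (u : Fin k → F) (C : Finset (Fin m)) : F :=
  if h : C.card + 1 = k then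
    Matrix.det (Matrix.of ((Fin.cons u fun j => g (C.orderEmbOfFin rfl j)) ∘ Fin.cast h.symm))
  else 0

/-- The matrix `M_n` associated to an ordered arc `g : Fin m → (Fin k → F)`. -/
noncomputable def arcMatrix {k m : ℕ} (g : Fin m → Fin k → F) (n : ℕ) :
    Matrix {C : Finset (Fin m) // C.card = k - 1}
      {AE : Finset (Fin m) × Finset (Fin m) //
        AE.2.card = m - n ∧ AE.1 ⊆ AE.2 ∧ AE.1.card = k - 2} F :=
  fun C AE =>
    if AE.1.1 ⊆ C.1 then ∏ u ∈ Finset.univ \ AE.1.2, detWith g (g u) C.1 else 0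

/-- `det(z, Y₁, …, Y_{k-1})`. -/
noncomputable def detRows {k : ℕ} (z : Fin k → F) (Y : Fin (k - 1) → Fin k → F) : F :=
  if h : k - 1 + 1 = k then Matrix.det (Matrix.of ((Fin.cons z Y) ∘ Fin.cast h.symm)) else 0

/-- `d_A(u,v) = det(u, v, p₁, …, p_{k-2})` for an ordered tuple `A = (p₁, …, p_{k-2})`. -/
noncomputable def dA {k : ℕ} (p : Fin (k - 2) → Fin k → F) (u v : Fin k → F) : F :=
  if h : k - 2 + 1 + 1 = k then
    Matrix.det (Matrix.of ((Fin.cons u (Fin.cons v p)) ∘ Fin.cast h.symm))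
  else 0

/-- `f` is a tangent polynomial for the `(k-2)`-subset `A` of the arc `S`:
a product of `t` pairwise linearly independent linear forms whose kernels meet `S` in `A`. -/
def IsTangentPoly {k : ℕ} (t : ℕ) (S A : Set (Fin k → F)) (f : (Fin k → F) → F) : Prop :=
  ∃ α : Fin t → ((Fin k → F) →ₗ[F] F),
    (∀ i j, i ≠ j → LinearIndependent F ![α i, α j]) ∧
    (∀ i, S ∩ {x | α i x = 0} = A) ∧
    ∀ x, f x = ∏ i, α i x

/-- Compatible families `(α_A)` (on `(k-2)`-subsets) and `(α_C)` (on `(k-1)`-subsets)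
of nonzero scalars, relative to the tangent polynomials `f`. -/
def CompatibleFamilies {k m : ℕ} (t : ℕ) (g : Fin m → Fin k → F)
    (f : Finset (Fin m) → (Fin k → F) → F) (a c : Finset (Fin m) → F) : Prop :=
  (∀ A : Finset (Fin m), A.card = k - 2 → a A ≠ 0) ∧
  (∀ C : Finset (Fin m), C.card = k - 1 → c C ≠ 0) ∧
  ∀ A : Finset (Fin m), A.card = k - 2 → ∀ e, e ∉ A →
    c (insert e A) =
      (-1 : F) ^ ((A.filter fun i => e < i).card * (t + 1)) * a A * f A (g e)

/-- The polynomial `φ(Y₁, …, Y_{k-1}) = Σ_C (α_C)^e ∏_{z ∈ E∖C} det(z,Y)/det(z,C)`. -/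
noncomputable def phiPoly {k M : ℕ} (e : ℕ) (g : Fin M → Fin k → F)
    (c : Finset (Fin M) → F) (E : Finset (Fin M)) (Y : Fin (k - 1) → Fin k → F) : F :=
  ∑ C ∈ E.powersetCard (k - 1), (c C) ^ e *
    ∏ z ∈ E \ C, detRows (g z) Y / detWith g (g z) C

/-- `(G, n)` has *Property W*. -/
def PropertyW {k m : ℕ} (g : Fin m → Fin k → F) (n : ℕ) : Prop :=
  ∀ A : Finset (Fin m), A.card = k - 2 →
    ∃ (C : Finset (Fin m)) (Cs : Fin (m - n - k + 1) → Finset (Fin m)),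
      C.card = k - 1 ∧ A ⊆ C ∧
      (∀ i, (Cs i).card = k - 1 ∧ A ⊆ Cs i ∧ Cs i ≠ C) ∧
      Function.Injective Cs ∧
      ∀ i, ∃ x, ∀ D : {C : Finset (Fin m) // C.card = k - 1},
        ((arcMatrix g n).mulVec x) D ≠ 0 ↔ (D.1 = C ∨ D.1 = Cs i)


open Finset

set_option linter.unusedSectionVars false
namespace S7
variable {F : Type*} [Field F] {k : ℕ}

/-- determinant of the k×k matrix with first row `u`, then rows `T`. -/
noncomputable def rdet {n : ℕ} (h : n + 1 = k) (u : Fin k → F) (T : Fin n → (Fin k → F)) : F :=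
  Matrix.det (Matrix.of ((Fin.cons u T) ∘ Fin.cast h.symm))

lemma row_apply {n : ℕ} (h : n + 1 = k) {α : Type*} (u : α) (T : Fin n → α)
    (j : Fin (n+1)) :
    ((Fin.cons u T) ∘ Fin.cast h.symm) (Fin.cast h j)
      = (Fin.cons u T : Fin (n+1) → α) j := by
  simp only [Function.comp_apply]
  congr 1

lemma cast_surj {n : ℕ} (h : n + 1 = k) (i : Fin k) : ∃ j, i = Fin.cast h j :=
  ⟨Fin.cast h.symm i, by ext; simp⟩

lemma cast_inj {n : ℕ} (h : n + 1 = k) {a b : Fin (n+1)} (hab : a ≠ b) :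
    Fin.cast h a ≠ Fin.cast h b := by
  simp [Fin.ext_iff] at hab ⊢; exact hab

lemma cons_comp_cast_update {n : ℕ} (h : n + 1 = k) (u u' : Fin k → F)
    (T : Fin n → Fin k → F) :
    ((Fin.cons u T) ∘ Fin.cast h.symm) =
      Function.update ((Fin.cons u' T) ∘ Fin.cast h.symm) (Fin.cast h 0) u := by
  funext i
  obtain ⟨j, rfl⟩ := cast_surj h i
  rcases eq_or_ne j 0 with rfl | hj
  · rw [Function.update_self, row_apply, Fin.cons_zero]
  · rw [Function.update_of_ne (cast_inj h hj), row_apply, row_apply]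
    obtain ⟨j', rfl⟩ := Fin.exists_succ_eq.2 hj
    rw [Fin.cons_succ, Fin.cons_succ]

lemma rdet_base {n : ℕ} (h : n + 1 = k) (u : Fin k → F) (T : Fin n → Fin k → F) :
    rdet h u T = Matrix.detRowAlternating
      (Function.update ((Fin.cons 0 T) ∘ Fin.cast h.symm) (Fin.cast h 0) u) := by
  rw [rdet, cons_comp_cast_update h u 0 T]; rfl

lemma rdet_add {n : ℕ} (h : n + 1 = k) (u u' : Fin k → F) (T : Fin n → Fin k → F) :
    rdet h (u + u') T = rdet h u T + rdet h u' T := by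
  rw [rdet_base, rdet_base, rdet_base]
  exact (Matrix.detRowAlternating).toMultilinearMap.map_update_add _ _ _ _

lemma rdet_smul {n : ℕ} (h : n + 1 = k) (a : F) (u : Fin k → F) (T : Fin n → Fin k → F) :
    rdet h (a • u) T = a * rdet h u T := by
  rw [rdet_base, rdet_base]
  exact (Matrix.detRowAlternating).toMultilinearMap.map_update_smul _ _ _ _

/-- as a linear form in the first row -/
noncomputable def rform {n : ℕ} (h : n + 1 = k) (T : Fin n → (Fin k → F)) :
    (Fin k → F) →ₗ[F] F where
  toFun u := rdet h u T
  map_add' u u' := rdet_add h u u' T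
  map_smul' a u := rdet_smul h a u T

@[simp] lemma rform_apply {n : ℕ} (h : n + 1 = k) (T : Fin n → (Fin k → F)) (u) :
    rform h T u = rdet h u T := rfl

lemma rdet_eq_zero_of_eq {n : ℕ} (h : n + 1 = k) (u : Fin k → F) (T : Fin n → Fin k → F)
    (j : Fin n) (hj : u = T j) : rdet h u T = 0 := by
  apply Matrix.det_zero_of_row_eq (i := Fin.cast h 0) (j := Fin.cast h j.succ)
  · exact cast_inj h (Fin.succ_ne_zero j).symm
  · show ((Fin.cons u T) ∘ Fin.cast h.symm) (Fin.cast h 0)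
      = ((Fin.cons u T) ∘ Fin.cast h.symm) (Fin.cast h j.succ)
    rw [row_apply, row_apply, Fin.cons_zero, Fin.cons_succ, hj]

lemma rdet_eq_zero_of_T_eq {n : ℕ} (h : n + 1 = k) (u : Fin k → F) (T : Fin n → Fin k → F)
    {i j : Fin n} (hij : i ≠ j) (hT : T i = T j) : rdet h u T = 0 := by
  apply Matrix.det_zero_of_row_eq (i := Fin.cast h i.succ) (j := Fin.cast h j.succ)
  · exact cast_inj h (by simpa [Fin.ext_iff] using (by simpa [Fin.ext_iff] using hij : (i:ℕ) ≠ j))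
  · show ((Fin.cons u T) ∘ Fin.cast h.symm) (Fin.cast h i.succ)
      = ((Fin.cons u T) ∘ Fin.cast h.symm) (Fin.cast h j.succ)
    rw [row_apply, row_apply, Fin.cons_succ, Fin.cons_succ, hT]

section DD
variable {c : ℕ} (hc : c + 1 + 1 = k) (ar : Fin c → (Fin k → F))

/-- `det(u, v, ar₁, …)` -/
noncomputable def DD (u v : Fin k → F) : F := rdet hc u (Fin.cons v ar)

lemma DD_self (u : Fin k → F) : DD hc ar u u = 0 :=
  rdet_eq_zero_of_eq hc u _ 0 (by rw [Fin.cons_zero])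

lemma DD_ar_left (j : Fin c) (v : Fin k → F) : DD hc ar (ar j) v = 0 :=
  rdet_eq_zero_of_eq hc _ _ j.succ (by rw [Fin.cons_succ])

lemma DD_ar_right (j : Fin c) (u : Fin k → F) : DD hc ar u (ar j) = 0 :=
  rdet_eq_zero_of_T_eq hc _ _ (i := 0) (j := j.succ) (Fin.succ_ne_zero j).symm
    (by rw [Fin.cons_zero, Fin.cons_succ])

lemma cons_cons_update (u v v' : Fin k → F) :
    ((Fin.cons u (Fin.cons v ar)) ∘ Fin.cast hc.symm) =
      Function.update ((Fin.cons u (Fin.cons v' ar)) ∘ Fin.cast hc.symm) (Fin.cast hc 1) v := by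
  funext i
  obtain ⟨j, rfl⟩ := cast_surj hc i
  induction j using Fin.cases with
  | zero =>
      rw [Function.update_of_ne (cast_inj hc (by simp [Fin.ext_iff])), row_apply, row_apply,
        Fin.cons_zero, Fin.cons_zero]
  | succ j =>
      induction j using Fin.cases with
      | zero =>
          have h1 : (Fin.succ 0 : Fin (c + 1 + 1)) = 1 := rfl
          rw [h1, Function.update_self, row_apply]
          show (Fin.cons u (Fin.cons v ar) : Fin (c+1+1) → Fin k → F) 1 = v
          have h2 : (1 : Fin (c+1+1)) = Fin.succ 0 := rfl
          rw [h2, Fin.cons_succ, Fin.cons_zero]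
      | succ j' =>
          rw [Function.update_of_ne (cast_inj hc (by simp [Fin.ext_iff])), row_apply,
            row_apply, Fin.cons_succ, Fin.cons_succ, Fin.cons_succ, Fin.cons_succ]

lemma DD_snd_base (u v : Fin k → F) :
    DD hc ar u v = Matrix.detRowAlternating
      (Function.update ((Fin.cons u (Fin.cons 0 ar)) ∘ Fin.cast hc.symm) (Fin.cast hc 1) v) := by
  rw [DD, rdet, cons_cons_update hc ar u v 0]; rfl

lemma DD_snd_add (u v v' : Fin k → F) :
    DD hc ar u (v + v') = DD hc ar u v + DD hc ar u v' := by
  rw [DD_snd_base, DD_snd_base, DD_snd_base]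
  exact (Matrix.detRowAlternating).toMultilinearMap.map_update_add _ _ _ _

lemma DD_snd_smul (a : F) (u v : Fin k → F) :
    DD hc ar u (a • v) = a * DD hc ar u v := by
  rw [DD_snd_base, DD_snd_base]
  exact (Matrix.detRowAlternating).toMultilinearMap.map_update_smul _ _ _ _

/-- the linear form `v ↦ det(u,v,ar)` -/
noncomputable def Dsnd (u : Fin k → F) : (Fin k → F) →ₗ[F] F where
  toFun v := DD hc ar u v
  map_add' := DD_snd_add hc ar u
  map_smul' a v := DD_snd_smul hc ar a u v

@[simp] lemma Dsnd_apply (u v : Fin k → F) : Dsnd hc ar u v = DD hc ar u v := rfl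

/-- the linear form `u ↦ det(u,v,ar)` -/
noncomputable def Dfst (v : Fin k → F) : (Fin k → F) →ₗ[F] F := rform hc (Fin.cons v ar)

@[simp] lemma Dfst_apply (u v : Fin k → F) : Dfst hc ar v u = DD hc ar u v := rfl

lemma DD_swap (u v : Fin k → F) : DD hc ar u v = - DD hc ar v u := by
  have h01 : (Fin.cast hc 0 : Fin k) ≠ Fin.cast hc 1 := cast_inj hc (by simp [Fin.ext_iff])
  have key : Matrix.of ((Fin.cons u (Fin.cons v ar)) ∘ Fin.cast hc.symm) =
      (Matrix.of ((Fin.cons v (Fin.cons u ar)) ∘ Fin.cast hc.symm)).submatrix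
        (Equiv.swap (Fin.cast hc 0) (Fin.cast hc 1)) id := by
    funext i jc
    obtain ⟨j, rfl⟩ := cast_surj hc i
    induction j using Fin.cases with
    | zero =>
        rw [Matrix.submatrix_apply, Equiv.swap_apply_left, id, Matrix.of_apply,
          Matrix.of_apply, row_apply, row_apply, Fin.cons_zero]
        show u jc = (Fin.cons v (Fin.cons u ar) : Fin (c+1+1) → Fin k → F) 1 jc
        have h2 : (1 : Fin (c+1+1)) = Fin.succ 0 := rfl
        rw [h2, Fin.cons_succ, Fin.cons_zero]
    | succ j =>
        induction j using Fin.cases with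
        | zero =>
            have h1 : (Fin.succ 0 : Fin (c + 1 + 1)) = 1 := rfl
            rw [h1, Matrix.submatrix_apply, Equiv.swap_apply_right, id, Matrix.of_apply,
              Matrix.of_apply, row_apply, row_apply, Fin.cons_zero]
            show (Fin.cons u (Fin.cons v ar) : Fin (c+1+1) → Fin k → F) 1 jc = v jc
            have h2 : (1 : Fin (c+1+1)) = Fin.succ 0 := rfl
            rw [h2, Fin.cons_succ, Fin.cons_zero]
        | succ j' =>
            rw [Matrix.submatrix_apply,
              Equiv.swap_apply_of_ne_of_ne (cast_inj hc (by simp [Fin.ext_iff]))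
                (cast_inj hc (by simp [Fin.ext_iff])), id, Matrix.of_apply,
              Matrix.of_apply, row_apply, row_apply, Fin.cons_succ, Fin.cons_succ,
              Fin.cons_succ, Fin.cons_succ]
  rw [DD, DD, rdet, rdet, key, Matrix.det_permute, Equiv.Perm.sign_swap h01]
  push_cast
  ring

end DD

section Arc
variable {m : ℕ} (g : Fin m ↪ (Fin k → F)) (hG : IsArc (Set.range ⇑g))
lemma cast_comp_inj {n : ℕ} (h : n + 1 = k) (W : Fin (n+1) → Fin m)
    (hW : Function.Injective W) : Function.Injective (W ∘ Fin.cast h.symm) :=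
  hW.comp (fun a b hab => by simpa [Fin.ext_iff] using hab)

lemma rdet_comp {n : ℕ} (h : n + 1 = k) (x : Fin m) (T : Fin n → Fin m) :
    rdet h (g x) (⇑g ∘ T) = Matrix.det (Matrix.of (⇑g ∘ ((Fin.cons x T) ∘ Fin.cast h.symm))) := by
  rw [rdet, ← Fin.comp_cons, Function.comp_assoc]

include hG

lemma arc_li (w : Fin k → Fin m) (hw : Function.Injective w) :
    LinearIndependent F (⇑g ∘ w) := by
  classical
  set T : Finset (Fin k → F) := Finset.univ.image (⇑g ∘ w) with hT
  have hginj : Function.Injective (⇑g ∘ w) := g.injective.comp hw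
  have hTcard : T.card = k := by
    rw [hT, Finset.card_image_of_injective _ hginj, card_univ, Fintype.card_fin]
  have hsub : ↑T ⊆ Set.range ⇑g := by
    intro x hx
    simp only [hT, coe_image, Set.mem_image, coe_univ, Set.mem_univ, true_and] at hx
    obtain ⟨i, _, rfl⟩ := hx
    exact ⟨w i, rfl⟩
  have hli := hG T hsub hTcard
  exact hli.comp (fun i : Fin k => (⟨g (w i), by simp [hT, Finset.mem_image]⟩ : {x // x ∈ T}))
    (fun a b hab => hginj (congrArg Subtype.val hab))

lemma arc_span_top (w : Fin k → Fin m) (hw : Function.Injective w) :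
    Submodule.span F (Set.range (⇑g ∘ w)) = ⊤ :=
  (arc_li g hG w hw).span_eq_top_of_card_eq_finrank'
    (by simp [Module.finrank_fintype_fun_eq_card])

lemma form_eq_zero (w : Fin k → Fin m) (hw : Function.Injective w)
    (β : (Fin k → F) →ₗ[F] F) (hβ : ∀ i, β (g (w i)) = 0) : β = 0 :=
  LinearMap.ext_on (arc_span_top g hG w hw) (by rintro x ⟨i, rfl⟩; simpa using hβ i)

lemma arc_det_ne_zero (W : Fin k → Fin m) (hW : Function.Injective W) :
    Matrix.det (Matrix.of (⇑g ∘ W)) ≠ 0 := by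
  classical
  intro h0
  obtain ⟨v, hv, hsum⟩ := (Matrix.exists_vecMul_eq_zero_iff).2 h0
  have hli := arc_li g hG W hW
  have hz : ∀ i, v i = 0 := by
    apply Fintype.linearIndependent_iff.1 hli v
    funext j
    have := congrFun hsum j
    simpa [Matrix.vecMul, dotProduct, Finset.sum_apply] using this
  exact hv (funext hz)



lemma rdet_arc_ne_zero {n : ℕ} (h : n + 1 = k) (x : Fin m) (T : Fin n → Fin m)
    (hinj : Function.Injective (Fin.cons x T : Fin (n+1) → Fin m)) :
    rdet h (g x) (⇑g ∘ T) ≠ 0 := by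
  rw [rdet_comp]
  exact arc_det_ne_zero g hG _ (cast_comp_inj h _ hinj)

end Arc

section ASec
variable {m : ℕ} (g : Fin m ↪ (Fin k → F)) (hG : IsArc (Set.range ⇑g))
  {c : ℕ} (hc : c + 1 + 1 = k) (A : Finset (Fin m)) (hA : A.card = c)

/-- the increasing enumeration of `A` -/
noncomputable def oaf : Fin c → Fin m := ⇑(A.orderEmbOfFin hA)

/-- the vectors of the arc indexed by `A`, in increasing order -/
noncomputable def arv : Fin c → (Fin k → F) := ⇑g ∘ oaf A hA

lemma oaf_inj : Function.Injective (oaf A hA) := (A.orderEmbOfFin hA).injective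

lemma range_oaf : Set.range (oaf A hA) = ↑A := Finset.range_orderEmbOfFin A hA

lemma mem_iff_oaf {x : Fin m} : x ∈ A ↔ ∃ j, oaf A hA j = x := by
  rw [← Finset.mem_coe, ← range_oaf A hA]
  exact Iff.rfl

lemma cons2_inj {x y : Fin m} (hx : x ∉ A) (hy : y ∉ A) (hxy : x ≠ y) :
    Function.Injective (Fin.cons x (Fin.cons y (oaf A hA)) : Fin (c+1+1) → Fin m) := by
  rw [Fin.cons_injective_iff]
  constructor
  · rw [Fin.range_cons, range_oaf A hA]
    rintro (rfl | hxA)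
    · exact hxy rfl
    · exact hx hxA
  · rw [Fin.cons_injective_iff]
    refine ⟨fun hyr => ?_, oaf_inj A hA⟩
    rw [range_oaf A hA] at hyr
    exact hy hyr

lemma DDg_eq (x y : Fin m) :
    DD hc (arv g A hA) (g x) (g y) = rdet hc (g x) (⇑g ∘ (Fin.cons y (oaf A hA))) := by
  rw [DD, arv, Fin.comp_cons]

include hG hc

lemma DDg_ne_zero {x y : Fin m} (hx : x ∉ A) (hy : y ∉ A) (hxy : x ≠ y) :
    DD hc (arv g A hA) (g x) (g y) ≠ 0 := by
  rw [DDg_eq]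
  exact rdet_arc_ne_zero g hG hc x _ (cons2_inj A hA hx hy hxy)

lemma form_eq_zero_A (β : (Fin k → F) →ₗ[F] F) (har : ∀ j, β (arv g A hA j) = 0)
    {x y : Fin m} (hx : x ∉ A) (hy : y ∉ A) (hxy : x ≠ y)
    (hβx : β (g x) = 0) (hβy : β (g y) = 0) : β = 0 := by
  apply form_eq_zero g hG ((Fin.cons x (Fin.cons y (oaf A hA))) ∘ Fin.cast hc.symm)
    (cast_comp_inj hc _ (cons2_inj A hA hx hy hxy))
  intro i
  obtain ⟨j, rfl⟩ := cast_surj hc i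
  rw [Function.comp_apply]
  have hr := row_apply hc x (Fin.cons y (oaf A hA)) j
  rw [Function.comp_apply] at hr
  rw [hr]
  induction j using Fin.cases with
  | zero => rw [Fin.cons_zero]; exact hβx
  | succ j2 =>
      rw [Fin.cons_succ]
      induction j2 using Fin.cases with
      | zero => rw [Fin.cons_zero]; exact hβy
      | succ j3 => rw [Fin.cons_succ]; exact har j3

lemma DD_decomp {x y : Fin m} (hx : x ∉ A) (hy : y ∉ A) (hxy : x ≠ y)
    (w v : Fin k → F) :
    DD hc (arv g A hA) v w =
      (DD hc (arv g A hA) (g y) w / DD hc (arv g A hA) (g y) (g x)) * DD hc (arv g A hA) v (g x)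
      + (DD hc (arv g A hA) (g x) w / DD hc (arv g A hA) (g x) (g y))
          * DD hc (arv g A hA) v (g y) := by
  set ar := arv g A hA with har
  set lam := DD hc ar (g y) w / DD hc ar (g y) (g x) with hlam
  set mu := DD hc ar (g x) w / DD hc ar (g x) (g y) with hmu
  have hxyD : DD hc ar (g x) (g y) ≠ 0 := DDg_ne_zero g hG hc A hA hx hy hxy
  have hyxD : DD hc ar (g y) (g x) ≠ 0 := DDg_ne_zero g hG hc A hA hy hx hxy.symm
  have hβ : Dfst hc ar w - lam • Dfst hc ar (g x) - mu • Dfst hc ar (g y) = 0 := by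
    refine form_eq_zero_A g hG hc A hA _ ?har hx hy hxy ?hbx ?hby
    case har =>
      intro j
      simp only [LinearMap.sub_apply, LinearMap.smul_apply, Dfst_apply, smul_eq_mul]
      rw [DD_ar_left, DD_ar_left, DD_ar_left]
      ring
    case hbx =>
      simp only [LinearMap.sub_apply, LinearMap.smul_apply, Dfst_apply, smul_eq_mul]
      rw [DD_self, hmu, div_mul_cancel₀ _ hxyD]
      ring
    case hby =>
      simp only [LinearMap.sub_apply, LinearMap.smul_apply, Dfst_apply, smul_eq_mul]
      rw [DD_self, hlam, div_mul_cancel₀ _ hyxD]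
      ring
  have := LinearMap.congr_fun hβ v
  simp only [LinearMap.sub_apply, LinearMap.smul_apply, Dfst_apply, smul_eq_mul,
    LinearMap.zero_apply] at this
  linear_combination this

include hG hc in
lemma forms_prop {x y : Fin m} (hx : x ∉ A) (hy : y ∉ A) (hxy : x ≠ y) (w1 w2 : Fin k → F)
    (hcross : DD hc (arv g A hA) (g x) w1 * DD hc (arv g A hA) (g y) w2
      = DD hc (arv g A hA) (g y) w1 * DD hc (arv g A hA) (g x) w2) (v : Fin k → F) :
    DD hc (arv g A hA) (g y) w2 * DD hc (arv g A hA) v w1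
      = DD hc (arv g A hA) (g y) w1 * DD hc (arv g A hA) v w2 := by
  have hd : (DD hc (arv g A hA) (g y) w2) • Dfst hc (arv g A hA) w1
      - (DD hc (arv g A hA) (g y) w1) • Dfst hc (arv g A hA) w2 = 0 := by
    refine form_eq_zero_A g hG hc A hA _ ?har hx hy hxy ?hbx ?hby
    case har =>
      intro j
      simp only [LinearMap.sub_apply, LinearMap.smul_apply, Dfst_apply, smul_eq_mul]
      rw [DD_ar_left, DD_ar_left]
      ring
    case hbx =>
      simp only [LinearMap.sub_apply, LinearMap.smul_apply, Dfst_apply, smul_eq_mul]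
      linear_combination hcross
    case hby =>
      simp only [LinearMap.sub_apply, LinearMap.smul_apply, Dfst_apply, smul_eq_mul]
      ring
  have hv2 := LinearMap.congr_fun hd v
  simp only [LinearMap.sub_apply, LinearMap.smul_apply, Dfst_apply, smul_eq_mul,
    LinearMap.zero_apply] at hv2
  linear_combination hv2

end ASec

section Step1
variable {m : ℕ} (g : Fin m ↪ (Fin k → F)) (hG : IsArc (Set.range ⇑g))
  {c : ℕ} (hc : c + 1 + 1 = k) (A : Finset (Fin m)) (hA : A.card = c)

/-- products of `n` linear forms vanishing on the span of the `A`-vectors -/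
def GenSet (n : ℕ) : Set ((Fin k → F) → F) :=
  {φ | ∃ ws : Multiset (Fin k → F), Multiset.card ws = n ∧
    φ = fun v => (ws.map (fun w => DD hc (arv g A hA) v w)).prod}

/-- monomials in the two forms attached to `a`, `b` -/
def MonSet (a b : Fin m) (n : ℕ) : Set ((Fin k → F) → F) :=
  {φ | ∃ i j : ℕ, i + j = n ∧
    φ = fun v => DD hc (arv g A hA) v (g a) ^ i * DD hc (arv g A hA) v (g b) ^ j}

lemma mon_mem_gen (a b : Fin m) (i j n : ℕ) (hij : i + j = n) :
    (fun v => DD hc (arv g A hA) v (g a) ^ i * DD hc (arv g A hA) v (g b) ^ j)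
      ∈ GenSet g hc A hA n := by
  subst hij
  refine ⟨Multiset.replicate i (g a) + Multiset.replicate j (g b), by simp, ?_⟩
  funext v
  simp [Multiset.map_replicate, Multiset.prod_replicate]

lemma mul_form_mem_mon {a b : Fin m} {n : ℕ} {f : (Fin k → F) → F}
    (hf : f ∈ Submodule.span F (MonSet g hc A hA a b n)) (w : Fin m) (hw : w = a ∨ w = b) :
    (fun v => DD hc (arv g A hA) v (g w) * f v)
      ∈ Submodule.span F (MonSet g hc A hA a b (n + 1)) := by
  induction hf using Submodule.span_induction with
  | mem φ hφ =>
      obtain ⟨i, j, hij, rfl⟩ := hφ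
      apply Submodule.subset_span
      rcases hw with rfl | rfl
      · exact ⟨i + 1, j, by omega, by funext v; ring⟩
      · exact ⟨i, j + 1, by omega, by funext v; ring⟩
  | zero =>
      have hz : (fun v => DD hc (arv g A hA) v (g w) * (0 : (Fin k → F) → F) v)
          = (0 : (Fin k → F) → F) := by funext v; simp
      rw [hz]; exact Submodule.zero_mem _
  | add φ ψ _ _ h1 h2 =>
      have : (fun v => DD hc (arv g A hA) v (g w) * (φ + ψ) v)
          = (fun v => DD hc (arv g A hA) v (g w) * φ v)
            + fun v => DD hc (arv g A hA) v (g w) * ψ v := by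
        funext v; simp [mul_add]
      rw [this]
      exact Submodule.add_mem _ h1 h2
  | smul r φ _ h1 =>
      have : (fun v => DD hc (arv g A hA) v (g w) * (r • φ) v)
          = r • fun v => DD hc (arv g A hA) v (g w) * φ v := by
        funext v; simp [smul_eq_mul]; ring
      rw [this]
      exact Submodule.smul_mem _ _ h1

include hG in
lemma gen_sub_mon {a b : Fin m} (ha : a ∉ A) (hb : b ∉ A) (hab : a ≠ b) {n : ℕ}
    {φ : (Fin k → F) → F} (hφ : φ ∈ GenSet g hc A hA n) :
    φ ∈ Submodule.span F (MonSet g hc A hA a b n) := by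
  obtain ⟨ws, hcard, rfl⟩ := hφ
  induction ws using Multiset.induction generalizing n with
  | empty =>
      apply Submodule.subset_span
      refine ⟨0, 0, by simp at hcard; omega, ?_⟩
      funext v; simp
  | cons w ws ih =>
      rw [Multiset.card_cons] at hcard
      have hrest := ih (n := Multiset.card ws) rfl
      set lam := DD hc (arv g A hA) (g b) w / DD hc (arv g A hA) (g b) (g a) with hlam
      set mu := DD hc (arv g A hA) (g a) w / DD hc (arv g A hA) (g a) (g b) with hmu
      have hdec := DD_decomp g hG hc A hA ha hb hab w
      have heq : (fun v => (Multiset.map (fun w => DD hc (arv g A hA) v w) (w ::ₘ ws)).prod)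
          = lam • (fun v => DD hc (arv g A hA) v (g a)
              * (Multiset.map (fun w => DD hc (arv g A hA) v w) ws).prod)
            + mu • (fun v => DD hc (arv g A hA) v (g b)
              * (Multiset.map (fun w => DD hc (arv g A hA) v w) ws).prod) := by
        funext v
        simp only [Multiset.map_cons, Multiset.prod_cons, Pi.add_apply, Pi.smul_apply,
          smul_eq_mul]
        rw [hdec v]
        ring
      rw [heq]
      subst hcard
      exact Submodule.add_mem _
        (Submodule.smul_mem _ _ (mul_form_mem_mon g hc A hA hrest a (Or.inl rfl)))
        (Submodule.smul_mem _ _ (mul_form_mem_mon g hc A hA hrest b (Or.inr rfl)))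

include hG in
lemma step_kill {n : ℕ}
    (IH : ∀ (Y : Finset (Fin m)), (∀ x ∈ Y, x ∉ A) → Y.card = n + 2 →
      ∀ f ∈ Submodule.span F (GenSet g hc A hA n),
        ∑ e ∈ Y, f (g e) * ∏ u ∈ Y.erase e, (DD hc (arv g A hA) (g e) (g u))⁻¹ = 0)
    (Y : Finset (Fin m)) (hYA : ∀ x ∈ Y, x ∉ A) (hYc : Y.card = n + 3)
    (p : Fin m) (hp : p ∈ Y) (h : (Fin k → F) → F)
    (hh : h ∈ Submodule.span F (GenSet g hc A hA n)) :
    ∑ e ∈ Y, (DD hc (arv g A hA) (g e) (g p) * h (g e))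
      * ∏ u ∈ Y.erase e, (DD hc (arv g A hA) (g e) (g u))⁻¹ = 0 := by
  rw [← Finset.add_sum_erase _ _ hp, DD_self, zero_mul, zero_mul, zero_add]
  have hstep : ∀ e ∈ Y.erase p,
      (DD hc (arv g A hA) (g e) (g p) * h (g e))
        * ∏ u ∈ Y.erase e, (DD hc (arv g A hA) (g e) (g u))⁻¹
      = h (g e) * ∏ u ∈ (Y.erase p).erase e, (DD hc (arv g A hA) (g e) (g u))⁻¹ := by
    intro e he
    have hep : e ≠ p := Finset.ne_of_mem_erase he
    have heY : e ∈ Y := Finset.mem_of_mem_erase he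
    have hpe : p ∈ Y.erase e := Finset.mem_erase.2 ⟨hep.symm, hp⟩
    rw [← Finset.mul_prod_erase _ _ hpe, Finset.erase_right_comm]
    have hne : DD hc (arv g A hA) (g e) (g p) ≠ 0 :=
      DDg_ne_zero g hG hc A hA (hYA e heY) (hYA p hp) hep
    rw [mul_comm (DD hc (arv g A hA) (g e) (g p)) (h (g e)), mul_assoc,
      ← mul_assoc (DD hc (arv g A hA) (g e) (g p)), mul_inv_cancel₀ hne, one_mul]
  rw [Finset.sum_congr rfl hstep]
  exact IH (Y.erase p) (fun x hx => hYA x (Finset.mem_of_mem_erase hx))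
    (by rw [Finset.card_erase_of_mem hp, hYc]; omega) h hh

include hG in
lemma step1 (n : ℕ) : ∀ (Y : Finset (Fin m)), (∀ x ∈ Y, x ∉ A) → Y.card = n + 2 →
    ∀ f ∈ Submodule.span F (GenSet g hc A hA n),
      ∑ e ∈ Y, f (g e) * ∏ u ∈ Y.erase e, (DD hc (arv g A hA) (g e) (g u))⁻¹ = 0 := by
  induction n with
  | zero =>
      intro Y hYA hYc f hf
      induction hf using Submodule.span_induction with
      | mem φ hφ =>
          obtain ⟨ws, hcard, rfl⟩ := hφ
          rw [Multiset.card_eq_zero] at hcard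
          subst hcard
          obtain ⟨a, b, hab, rfl⟩ := Finset.card_eq_two.1 hYc
          have h1 : ({a, b} : Finset (Fin m)).erase a = {b} := by
            rw [Finset.erase_insert (by simpa using hab)]
          have h2 : ({a, b} : Finset (Fin m)).erase b = {a} := by
            rw [Finset.erase_insert_of_ne hab, Finset.erase_singleton]
            rfl
          rw [Finset.sum_pair hab, h1, h2, Finset.prod_singleton, Finset.prod_singleton]
          simp only [Multiset.map_zero, Multiset.prod_zero, one_mul]
          rw [DD_swap hc (arv g A hA) (g b) (g a), inv_neg, add_neg_cancel]
      | zero => simp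
      | add φ ψ hφ hψ h1 h2 => simp only [Pi.add_apply, add_mul, Finset.sum_add_distrib,
          h1, h2, add_zero]
      | smul r φ hφ h1 => simp only [Pi.smul_apply, smul_eq_mul, mul_assoc, ← Finset.mul_sum,
          h1, mul_zero]
  | succ n IH =>
      intro Y hYA hYc f hf
      -- pick two distinct points of Y
      have hYne : Y.Nonempty := Finset.card_pos.1 (by omega)
      obtain ⟨a, ha⟩ := hYne
      have hYea : (Y.erase a).Nonempty := Finset.card_pos.1
        (by rw [Finset.card_erase_of_mem ha]; omega)
      obtain ⟨b, hb'⟩ := hYea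
      have hbY : b ∈ Y := Finset.mem_of_mem_erase hb'
      have hba : b ≠ a := Finset.ne_of_mem_erase hb'
      induction hf using Submodule.span_induction with
      | mem φ hφ =>
          have hmon := gen_sub_mon g hG hc A hA (hYA a ha) (hYA b hbY) hba.symm hφ
          clear hφ
          induction hmon using Submodule.span_induction with
          | mem ψ hψ =>
              obtain ⟨i, j, hij, rfl⟩ := hψ
              rcases Nat.eq_zero_or_pos i with rfl | hi
              · -- ψ = DD(·,gb)^(n+1)
                have hj : j = n + 1 := by omega
                subst hj
                have heq : (fun v => DD hc (arv g A hA) v (g a) ^ 0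
                      * DD hc (arv g A hA) v (g b) ^ (n+1))
                    = fun v => DD hc (arv g A hA) v (g b)
                      * (DD hc (arv g A hA) v (g a) ^ 0 * DD hc (arv g A hA) v (g b) ^ n) := by
                  funext v; ring
                rw [heq]
                exact step_kill g hG hc A hA IH Y hYA (by omega) b hbY _
                  (Submodule.subset_span (mon_mem_gen g hc A hA a b 0 n n (by omega)))
              · obtain ⟨i', rfl⟩ : ∃ i', i = i' + 1 := ⟨i - 1, by omega⟩
                have heq : (fun v => DD hc (arv g A hA) v (g a) ^ (i'+1)
                      * DD hc (arv g A hA) v (g b) ^ j)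
                    = fun v => DD hc (arv g A hA) v (g a)
                      * (DD hc (arv g A hA) v (g a) ^ i' * DD hc (arv g A hA) v (g b) ^ j) := by
                  funext v; ring
                rw [heq]
                exact step_kill g hG hc A hA IH Y hYA (by omega) a ha _
                  (Submodule.subset_span (mon_mem_gen g hc A hA a b i' j n (by omega)))
          | zero => simp
          | add φ' ψ' hφ' hψ' h1 h2 => simp only [Pi.add_apply, add_mul,
              Finset.sum_add_distrib, h1, h2, add_zero]
          | smul r φ' hφ' h1 => simp only [Pi.smul_apply, smul_eq_mul, mul_assoc,
              ← Finset.mul_sum, h1, mul_zero]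
      | zero => simp
      | add φ ψ hφ hψ h1 h2 => simp only [Pi.add_apply, add_mul, Finset.sum_add_distrib,
          h1, h2, add_zero]
      | smul r φ hφ h1 => simp only [Pi.smul_apply, smul_eq_mul, mul_assoc,
          ← Finset.mul_sum, h1, mul_zero]

end Step1

section Tangent
open scoped Classical
variable [Fintype F] {m : ℕ} (g : Fin m ↪ (Fin k → F)) (hG : IsArc (Set.range ⇑g))
  {c : ℕ} (hc : c + 1 + 1 = k) (A : Finset (Fin m)) (hA : A.card = c)
  (u0 v0 : Fin m) (hu0 : u0 ∉ A) (hv0 : v0 ∉ A) (huv0 : u0 ≠ v0)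

noncomputable def pairAt (s : Fin m) : F × F :=
  (DD hc (arv g A hA) (g u0) (g s), DD hc (arv g A hA) (g v0) (g s))

noncomputable def RSet : Finset (F × F) :=
  insert (1,0) (Finset.image (fun x : F => (x,1)) Finset.univ)

noncomputable def normPair (p : F × F) : F × F := if p.2 = 0 then (1,0) else (p.1/p.2, 1)

noncomputable def sigmaT (s : Fin m) : F × F := normPair (pairAt g hc A hA u0 v0 s)

noncomputable def TSet : Finset (F × F) :=
  RSet \ (Finset.image (sigmaT g hc A hA u0 v0) (Finset.univ \ A))

noncomputable def wvec (r : F × F) : Fin k → F :=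
  (r.2 / DD hc (arv g A hA) (g v0) (g u0)) • (g u0)
    + (r.1 / DD hc (arv g A hA) (g u0) (g v0)) • (g v0)

lemma one_zero_not_mem_image : ((1,0) : F × F) ∉ Finset.image (fun x : F => (x,1)) Finset.univ := by
  simp only [Finset.mem_image, Finset.mem_univ, true_and, not_exists]
  intro x hx
  have := congrArg Prod.snd hx
  simp at this

lemma card_RSet : (RSet : Finset (F × F)).card = Fintype.card F + 1 := by
  rw [RSet, Finset.card_insert_of_notMem one_zero_not_mem_image,
    Finset.card_image_of_injective _ (fun a b hab => by simpa [Prod.ext_iff] using hab)]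
  simp

lemma mem_RSet_snd_zero {r : F × F} (hr : r ∈ (RSet : Finset (F × F))) (h2 : r.2 = 0) :
    r = (1,0) := by
  rw [RSet, Finset.mem_insert] at hr
  rcases hr with rfl | hr
  · rfl
  · obtain ⟨x, _, rfl⟩ := Finset.mem_image.1 hr
    simp at h2

lemma mem_RSet_snd_ne {r : F × F} (hr : r ∈ (RSet : Finset (F × F))) (h2 : r.2 ≠ 0) :
    r.2 = 1 := by
  rw [RSet, Finset.mem_insert] at hr
  rcases hr with rfl | hr
  · simp at h2
  · obtain ⟨x, _, rfl⟩ := Finset.mem_image.1 hr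
    rfl

lemma mem_RSet_ne_zero {r : F × F} (hr : r ∈ (RSet : Finset (F × F))) : r ≠ (0,0) := by
  intro h0
  rcases eq_or_ne r.2 0 with h2 | h2
  · have := mem_RSet_snd_zero hr h2
    rw [h0] at this
    simpa using congrArg Prod.fst this
  · exact h2 (by rw [h0])

lemma normPair_mem_RSet (p : F × F) : normPair p ∈ (RSet : Finset (F × F)) := by
  rw [normPair, RSet]
  split
  · exact Finset.mem_insert_self _ _
  · exact Finset.mem_insert_of_mem (Finset.mem_image.2 ⟨_, Finset.mem_univ _, rfl⟩)

lemma normPair_eq_of_smul {r p : F × F} (hr : r ∈ (RSet : Finset (F × F))) {cz : F}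
    (hcz : cz ≠ 0) (h1 : r.1 = cz * p.1) (h2 : r.2 = cz * p.2) : normPair p = r := by
  rcases eq_or_ne p.2 0 with hp2 | hp2
  · have hr2 : r.2 = 0 := by rw [h2, hp2, mul_zero]
    rw [normPair, if_pos hp2, mem_RSet_snd_zero hr hr2]
  · have hr2 : r.2 ≠ 0 := by rw [h2]; exact mul_ne_zero hcz hp2
    have hr2' : r.2 = 1 := mem_RSet_snd_ne hr hr2
    have hcz' : cz = 1 / p.2 := (eq_div_iff hp2).2 (by rw [← h2, hr2'])
    rw [normPair, if_neg hp2]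
    have : r.1 = p.1 / p.2 := by rw [h1, hcz']; ring
    ext
    · simp [this]
    · simp [hr2']

lemma exists_smul_normPair {p : F × F} (hp : p ≠ (0,0)) :
    ∃ cz : F, cz ≠ 0 ∧ p.1 = cz * (normPair p).1 ∧ p.2 = cz * (normPair p).2 := by
  rcases eq_or_ne p.2 0 with hp2 | hp2
  · have hp1 : p.1 ≠ 0 := by
      intro h1
      exact hp (Prod.ext h1 hp2)
    exact ⟨p.1, hp1, by simp [normPair, hp2], by simp [normPair, hp2]⟩
  · refine ⟨p.2, hp2, ?_, ?_⟩
    · rw [normPair, if_neg hp2]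
      field_simp
    · rw [normPair, if_neg hp2]
      simp

lemma DD_wvec (r : F × F) (v : Fin k → F) :
    DD hc (arv g A hA) v (wvec g hc A hA u0 v0 r) =
      (r.2 / DD hc (arv g A hA) (g v0) (g u0)) * DD hc (arv g A hA) v (g u0)
      + (r.1 / DD hc (arv g A hA) (g u0) (g v0)) * DD hc (arv g A hA) v (g v0) := by
  rw [wvec, DD_snd_add, DD_snd_smul, DD_snd_smul]

include hG hu0 hv0 huv0

lemma DD_wvec_u0 (r : F × F) :
    DD hc (arv g A hA) (g u0) (wvec g hc A hA u0 v0 r) = r.1 := by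
  rw [DD_wvec, DD_self, mul_zero, zero_add,
    div_mul_cancel₀ _ (DDg_ne_zero g hG hc A hA hu0 hv0 huv0)]

lemma DD_wvec_v0 (r : F × F) :
    DD hc (arv g A hA) (g v0) (wvec g hc A hA u0 v0 r) = r.2 := by
  rw [DD_wvec, DD_self, mul_zero, add_zero,
    div_mul_cancel₀ _ (DDg_ne_zero g hG hc A hA hv0 hu0 huv0.symm)]

lemma pairAt_ne_zero {s : Fin m} (hs : s ∉ A) : pairAt g hc A hA u0 v0 s ≠ (0,0) := by
  intro h0
  have h1 : DD hc (arv g A hA) (g u0) (g s) = 0 := congrArg Prod.fst h0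
  have h2 : DD hc (arv g A hA) (g v0) (g s) = 0 := congrArg Prod.snd h0
  rcases eq_or_ne s u0 with rfl | hsu
  · exact DDg_ne_zero g hG hc A hA hv0 hs (fun h => huv0 h.symm) h2
  · exact DDg_ne_zero g hG hc A hA hu0 hs (fun h => hsu h.symm) h1


lemma sigma_injOn {s s' : Fin m} (hs : s ∉ A) (hs' : s' ∉ A)
    (hss : sigmaT g hc A hA u0 v0 s = sigmaT g hc A hA u0 v0 s') : s = s' := by
  by_contra hne
  obtain ⟨cz, hcz, hc1, hc2⟩ := exists_smul_normPair (p := pairAt g hc A hA u0 v0 s)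
    (pairAt_ne_zero g hG hc A hA u0 v0 hu0 hv0 huv0 hs)
  obtain ⟨cz', hcz', hc1', hc2'⟩ := exists_smul_normPair (p := pairAt g hc A hA u0 v0 s')
    (pairAt_ne_zero g hG hc A hA u0 v0 hu0 hv0 huv0 hs')
  simp only [sigmaT] at hss
  rw [hss] at hc1 hc2
  -- cross relation between the forms of g s and g s'
  have hcross : DD hc (arv g A hA) (g u0) (g s) * DD hc (arv g A hA) (g v0) (g s')
      = DD hc (arv g A hA) (g v0) (g s) * DD hc (arv g A hA) (g u0) (g s') := by
    have e1 : DD hc (arv g A hA) (g u0) (g s) = (pairAt g hc A hA u0 v0 s).1 := rfl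
    have e2 : DD hc (arv g A hA) (g v0) (g s) = (pairAt g hc A hA u0 v0 s).2 := rfl
    have e1' : DD hc (arv g A hA) (g u0) (g s') = (pairAt g hc A hA u0 v0 s').1 := rfl
    have e2' : DD hc (arv g A hA) (g v0) (g s') = (pairAt g hc A hA u0 v0 s').2 := rfl
    rw [e1, e2, e1', e2', hc1, hc2, hc1', hc2']
    ring
  have key := forms_prop g hG hc A hA hu0 hv0 huv0 (g s) (g s') hcross
  have key1 := key (g s)
  rw [DD_self, mul_zero] at key1
  have hzs : DD hc (arv g A hA) (g v0) (g s) = 0 := by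
    rcases mul_eq_zero.1 key1.symm with h | h
    · exact h
    · exact absurd h (DDg_ne_zero g hG hc A hA hs hs' hne)
  -- now the other coordinate
  have hcross2 : DD hc (arv g A hA) (g v0) (g s) * DD hc (arv g A hA) (g u0) (g s')
      = DD hc (arv g A hA) (g u0) (g s) * DD hc (arv g A hA) (g v0) (g s') := by
    linear_combination - hcross
  have key2 := forms_prop g hG hc A hA hv0 hu0 huv0.symm (g s) (g s') hcross2 (g s)
  rw [DD_self, mul_zero] at key2
  have hzs2 : DD hc (arv g A hA) (g u0) (g s) = 0 := by
    rcases mul_eq_zero.1 key2.symm with h | h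
    · exact h
    · exact absurd h (DDg_ne_zero g hG hc A hA hs hs' hne)
  exact pairAt_ne_zero g hG hc A hA u0 v0 hu0 hv0 huv0 hs (Prod.ext hzs2 hzs)

lemma tangency {r : F × F} (hr : r ∈ TSet (F := F) g hc A hA u0 v0) {s : Fin m} (hs : s ∉ A) :
    DD hc (arv g A hA) (g s) (wvec g hc A hA u0 v0 r) ≠ 0 := by
  intro h0
  rw [TSet, Finset.mem_sdiff] at hr
  obtain ⟨hrR, hrT⟩ := hr
  -- pick x0 ∈ {u0, v0} different from s
  obtain ⟨x0, hx0A, hx0s⟩ : ∃ x0, x0 ∉ A ∧ x0 ≠ s := by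
    rcases eq_or_ne s u0 with rfl | hsu
    · exact ⟨v0, hv0, fun h => huv0 h.symm⟩
    · exact ⟨u0, hu0, fun h => hsu h.symm⟩
  set w1 := wvec g hc A hA u0 v0 r with hw1
  have hcross : DD hc (arv g A hA) (g s) w1 * DD hc (arv g A hA) (g x0) (g s)
      = DD hc (arv g A hA) (g x0) w1 * DD hc (arv g A hA) (g s) (g s) := by
    rw [h0, DD_self]
    ring
  have key := forms_prop g hG hc A hA hs hx0A (fun h => hx0s h.symm) w1 (g s) hcross
  -- key : ∀ v, DD (g x0) (g s) * DD v w1 = DD (g x0) w1 * DD v (g s)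
  have hx0sD : DD hc (arv g A hA) (g x0) (g s) ≠ 0 :=
    DDg_ne_zero g hG hc A hA hx0A hs hx0s
  have hβ : DD hc (arv g A hA) (g x0) w1 ≠ 0 := by
    intro hb0
    have k1 := key (g u0)
    have k2 := key (g v0)
    rw [hb0, zero_mul] at k1 k2
    rw [DD_wvec_u0 g hG hc A hA u0 v0 hu0 hv0 huv0] at k1
    rw [DD_wvec_v0 g hG hc A hA u0 v0 hu0 hv0 huv0] at k2
    have h1 : r.1 = 0 := by
      rcases mul_eq_zero.1 k1 with h | h
      · exact absurd h hx0sD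
      · exact h
    have h2 : r.2 = 0 := by
      rcases mul_eq_zero.1 k2 with h | h
      · exact absurd h hx0sD
      · exact h
    exact mem_RSet_ne_zero hrR (Prod.ext h1 h2)
  -- r is proportional to pairAt s
  have hcz : DD hc (arv g A hA) (g x0) w1 / DD hc (arv g A hA) (g x0) (g s) ≠ 0 :=
    div_ne_zero hβ hx0sD
  have e1 : (pairAt g hc A hA u0 v0 s).1 = DD hc (arv g A hA) (g u0) (g s) := rfl
  have e2 : (pairAt g hc A hA u0 v0 s).2 = DD hc (arv g A hA) (g v0) (g s) := rfl
  have hr1 : r.1 = (DD hc (arv g A hA) (g x0) w1 / DD hc (arv g A hA) (g x0) (g s))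
      * (pairAt g hc A hA u0 v0 s).1 := by
    have k1 := key (g u0)
    rw [DD_wvec_u0 g hG hc A hA u0 v0 hu0 hv0 huv0] at k1
    rw [e1]
    field_simp
    linear_combination k1
  have hr2 : r.2 = (DD hc (arv g A hA) (g x0) w1 / DD hc (arv g A hA) (g x0) (g s))
      * (pairAt g hc A hA u0 v0 s).2 := by
    have k2 := key (g v0)
    rw [DD_wvec_v0 g hG hc A hA u0 v0 hu0 hv0 huv0] at k2
    rw [e2]
    field_simp
    linear_combination k2
  have hnorm := normPair_eq_of_smul hrR hcz hr1 hr2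
  apply hrT
  refine Finset.mem_image.2 ⟨s, ?_, hnorm⟩
  rw [Finset.mem_sdiff]
  exact ⟨Finset.mem_univ s, hs⟩


omit hG hu0 hv0 huv0 in
lemma prod_univ_erase_zero : ∏ x ∈ Finset.univ.erase (0 : F), x = -1 := by
  classical
  have h := FiniteField.prod_univ_units_id_eq_neg_one (K := F)
  have h2 : ((∏ x : Fˣ, x : Fˣ) : F) = ((-1 : Fˣ) : F) := by rw [h]
  rw [Units.val_neg, Units.val_one] at h2
  rw [← h2]
  push_cast
  refine (Finset.prod_bij (fun (x : Fˣ) _ => (x : F)) ?_ ?_ ?_ ?_).symm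
  · intro x _
    exact Finset.mem_erase.2 ⟨Units.ne_zero x, Finset.mem_univ _⟩
  · intro a _ b _ hab
    exact Units.ext hab
  · intro y hy
    exact ⟨Units.mk0 y (Finset.mem_erase.1 hy).1, Finset.mem_univ _, rfl⟩
  · intro x _
    rfl

lemma star_eq (t : ℕ) (ht : m + t = Fintype.card F + k - 1)
    {u v : Fin m} (hu : u ∉ A) (hv : v ∉ A) (huv : u ≠ v) :
    (∏ r ∈ TSet g hc A hA u0 v0, DD hc (arv g A hA) (g u) (wvec g hc A hA u0 v0 r))
      * ∏ s ∈ ((Finset.univ \ A).erase u).erase v, DD hc (arv g A hA) (g u) (g s)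
    = - ((∏ r ∈ TSet g hc A hA u0 v0, DD hc (arv g A hA) (g v) (wvec g hc A hA u0 v0 r))
      * ∏ s ∈ ((Finset.univ \ A).erase u).erase v, DD hc (arv g A hA) (g v) (g s)) := by
  classical
  set T := TSet g hc A hA u0 v0 with hT
  set S' := ((Finset.univ \ A).erase u).erase v with hS'
  have hmemS' : ∀ s ∈ S', s ∉ A ∧ s ≠ u ∧ s ≠ v := by
    intro s hsm
    rw [hS'] at hsm
    have h1 := Finset.ne_of_mem_erase hsm
    have h2 := Finset.mem_of_mem_erase hsm
    have h3 := Finset.ne_of_mem_erase h2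
    have h4 := Finset.mem_of_mem_erase h2
    exact ⟨(Finset.mem_sdiff.1 h4).2, h3, h1⟩
  have hTmem : ∀ r ∈ T, r ∈ (RSet : Finset (F × F)) := by
    intro r hr
    exact (Finset.mem_sdiff.1 hr).1
  -- nonzero values
  have hTu : ∀ r ∈ T, DD hc (arv g A hA) (g u) (wvec g hc A hA u0 v0 r) ≠ 0 :=
    fun r hr => tangency g hG hc A hA u0 v0 hu0 hv0 huv0 hr hu
  have hTv : ∀ r ∈ T, DD hc (arv g A hA) (g v) (wvec g hc A hA u0 v0 r) ≠ 0 :=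
    fun r hr => tangency g hG hc A hA u0 v0 hu0 hv0 huv0 hr hv
  have hSu : ∀ s ∈ S', DD hc (arv g A hA) (g u) (g s) ≠ 0 := by
    intro s hsm
    obtain ⟨hsA, hsu, _⟩ := hmemS' s hsm
    exact DDg_ne_zero g hG hc A hA hu hsA (fun h => hsu h.symm)
  have hSv : ∀ s ∈ S', DD hc (arv g A hA) (g v) (g s) ≠ 0 := by
    intro s hsm
    obtain ⟨hsA, _, hsv⟩ := hmemS' s hsm
    exact DDg_ne_zero g hG hc A hA hv hsA (fun h => hsv h.symm)
  set J := T.disjSum S' with hJ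
  set valf : (F × F) ⊕ (Fin m) → F := Sum.elim
      (fun r => DD hc (arv g A hA) (g u) (wvec g hc A hA u0 v0 r)
        / DD hc (arv g A hA) (g v) (wvec g hc A hA u0 v0 r))
      (fun s => DD hc (arv g A hA) (g u) (g s) / DD hc (arv g A hA) (g v) (g s)) with hvalf
  have hJmem : ∀ x ∈ J, (x ∈ J ↔ (∃ r ∈ T, Sum.inl r = x) ∨ ∃ s ∈ S', Sum.inr s = x) := by
    intro x _
    exact Finset.mem_disjSum
  -- valf maps J into univ.erase 0
  have hmaps : ∀ x ∈ J, valf x ∈ Finset.univ.erase (0 : F) := by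
    rintro (r | s) hx
    · have hrT : r ∈ T := Finset.inl_mem_disjSum.1 hx
      exact Finset.mem_erase.2 ⟨div_ne_zero (hTu r hrT) (hTv r hrT), Finset.mem_univ _⟩
    · have hsS : s ∈ S' := Finset.inr_mem_disjSum.1 hx
      exact Finset.mem_erase.2 ⟨div_ne_zero (hSu s hsS) (hSv s hsS), Finset.mem_univ _⟩
  -- injectivity
  have hinj : ∀ x ∈ J, ∀ y ∈ J, valf x = valf y → x = y := by
    rintro (r | s) hx (r' | s') hy hval
    · have hrT : r ∈ T := Finset.inl_mem_disjSum.1 hx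
      have hrT' : r' ∈ T := Finset.inl_mem_disjSum.1 hy
      simp only [hvalf, Sum.elim_inl] at hval
      have hcross := (div_eq_div_iff (hTv r hrT) (hTv r' hrT')).1 hval
      have key := forms_prop g hG hc A hA hu hv huv
        (wvec g hc A hA u0 v0 r) (wvec g hc A hA u0 v0 r')
        (by linear_combination hcross)
      have k1 := key (g u0)
      have k2 := key (g v0)
      rw [DD_wvec_u0 g hG hc A hA u0 v0 hu0 hv0 huv0,
        DD_wvec_u0 g hG hc A hA u0 v0 hu0 hv0 huv0] at k1
      rw [DD_wvec_v0 g hG hc A hA u0 v0 hu0 hv0 huv0,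
        DD_wvec_v0 g hG hc A hA u0 v0 hu0 hv0 huv0] at k2
      have hcz : DD hc (arv g A hA) (g v) (wvec g hc A hA u0 v0 r)
          / DD hc (arv g A hA) (g v) (wvec g hc A hA u0 v0 r') ≠ 0 :=
        div_ne_zero (hTv r hrT) (hTv r' hrT')
      have hr1 : r.1 = (DD hc (arv g A hA) (g v) (wvec g hc A hA u0 v0 r)
          / DD hc (arv g A hA) (g v) (wvec g hc A hA u0 v0 r')) * r'.1 := by
        rw [div_mul_eq_mul_div, eq_div_iff (hTv r' hrT')]
        linear_combination k1
      have hr2 : r.2 = (DD hc (arv g A hA) (g v) (wvec g hc A hA u0 v0 r)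
          / DD hc (arv g A hA) (g v) (wvec g hc A hA u0 v0 r')) * r'.2 := by
        rw [div_mul_eq_mul_div, eq_div_iff (hTv r' hrT')]
        linear_combination k2
      have h1 := normPair_eq_of_smul (hTmem r hrT) hcz hr1 hr2
      have h2 := normPair_eq_of_smul (hTmem r' hrT') (one_ne_zero (α := F))
        (by rw [one_mul]) (by rw [one_mul])
      rw [h2] at h1
      rw [h1]
    · -- inl r, inr s : impossible
      exfalso
      have hrT : r ∈ T := Finset.inl_mem_disjSum.1 hx
      have hsS : s' ∈ S' := Finset.inr_mem_disjSum.1 hy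
      obtain ⟨hsA, _, _⟩ := hmemS' s' hsS
      simp only [hvalf, Sum.elim_inl, Sum.elim_inr] at hval
      have hcross := (div_eq_div_iff (hTv r hrT) (hSv s' hsS)).1 hval
      have key := forms_prop g hG hc A hA hu hv huv
        (wvec g hc A hA u0 v0 r) (g s') (by linear_combination hcross) (g s')
      rw [DD_self, mul_zero] at key
      rcases mul_eq_zero.1 key with h | h
      · exact hSv s' hsS h
      · exact tangency g hG hc A hA u0 v0 hu0 hv0 huv0 hrT hsA h
    · -- inr s, inl r' : impossible
      exfalso
      have hsS : s ∈ S' := Finset.inr_mem_disjSum.1 hx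
      have hrT : r' ∈ T := Finset.inl_mem_disjSum.1 hy
      obtain ⟨hsA, _, _⟩ := hmemS' s hsS
      simp only [hvalf, Sum.elim_inl, Sum.elim_inr] at hval
      have hcross := (div_eq_div_iff (hSv s hsS) (hTv r' hrT)).1 hval
      have key := forms_prop g hG hc A hA hu hv huv
        (g s) (wvec g hc A hA u0 v0 r') (by linear_combination hcross) (g s)
      rw [DD_self, mul_zero] at key
      rcases mul_eq_zero.1 key.symm with h | h
      · exact hSv s hsS h
      · exact tangency g hG hc A hA u0 v0 hu0 hv0 huv0 hrT hsA h
    · -- inr s, inr s'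
      have hsS : s ∈ S' := Finset.inr_mem_disjSum.1 hx
      have hsS' : s' ∈ S' := Finset.inr_mem_disjSum.1 hy
      obtain ⟨hsA, _, _⟩ := hmemS' s hsS
      obtain ⟨hsA', _, _⟩ := hmemS' s' hsS'
      by_contra hne
      have hss : s ≠ s' := fun h => hne (by rw [h])
      simp only [hvalf, Sum.elim_inr] at hval
      have hcross := (div_eq_div_iff (hSv s hsS) (hSv s' hsS')).1 hval
      have key := forms_prop g hG hc A hA hu hv huv
        (g s) (g s') (by linear_combination hcross) (g s)
      rw [DD_self, mul_zero] at key
      rcases mul_eq_zero.1 key.symm with h | h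
      · exact hSv s hsS h
      · exact DDg_ne_zero g hG hc A hA hsA hsA' hss h
  -- cardinalities
  have hq1 : 1 ≤ Fintype.card F := Fintype.card_pos
  have hUA : (Finset.univ \ A).card = m - c := by
    rw [Finset.card_sdiff_of_subset (Finset.subset_univ A), Finset.card_univ, Fintype.card_fin, hA]
  have huUA : u ∈ Finset.univ \ A := Finset.mem_sdiff.2 ⟨Finset.mem_univ _, hu⟩
  have hvUA : v ∈ (Finset.univ \ A).erase u :=
    Finset.mem_erase.2 ⟨huv.symm, Finset.mem_sdiff.2 ⟨Finset.mem_univ _, hv⟩⟩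
  have hS'card : S'.card = m - c - 2 := by
    rw [hS', Finset.card_erase_of_mem hvUA, Finset.card_erase_of_mem huUA, hUA]
    omega
  have hmc2 : 2 ≤ m - c := by
    have : 1 ≤ ((Finset.univ \ A).erase u).card := Finset.card_pos.2 ⟨v, hvUA⟩
    rw [Finset.card_erase_of_mem huUA, hUA] at this
    omega
  have himsub : Finset.image (sigmaT g hc A hA u0 v0) (Finset.univ \ A)
      ⊆ (RSet : Finset (F × F)) := by
    intro r hr
    obtain ⟨s, _, rfl⟩ := Finset.mem_image.1 hr
    exact normPair_mem_RSet _
  have himcard : (Finset.image (sigmaT g hc A hA u0 v0) (Finset.univ \ A)).card = m - c := by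
    rw [Finset.card_image_of_injOn, hUA]
    intro a hamem b hbmem hab
    exact sigma_injOn g hG hc A hA u0 v0 hu0 hv0 huv0
      (Finset.mem_sdiff.1 hamem).2 (Finset.mem_sdiff.1 hbmem).2 hab
  have hTcard : T.card = Fintype.card F + 1 - (m - c) := by
    rw [hT, TSet, Finset.card_sdiff_of_subset himsub, card_RSet, himcard]
  have hmcq : m - c ≤ Fintype.card F + 1 := by omega
  have hJcard : J.card = Fintype.card F - 1 := by
    rw [hJ, Finset.card_disjSum, hTcard, hS'card]
    omega
  have herasecard : (Finset.univ.erase (0:F)).card = Fintype.card F - 1 := by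
    rw [Finset.card_erase_of_mem (Finset.mem_univ _), Finset.card_univ]
  -- the image equals univ.erase 0
  have himage : Finset.image valf J = Finset.univ.erase (0:F) := by
    apply Finset.eq_of_subset_of_card_le
    · intro x hx
      obtain ⟨j, hj, rfl⟩ := Finset.mem_image.1 hx
      exact hmaps j hj
    · rw [herasecard, Finset.card_image_of_injOn hinj, hJcard]
  have hprod : ∏ x ∈ J, valf x = -1 := by
    have := prod_univ_erase_zero (F := F)
    rw [← himage, Finset.prod_image hinj] at this
    exact this
  rw [hJ, Finset.prod_disjSum] at hprod
  simp only [hvalf, Sum.elim_inl, Sum.elim_inr] at hprod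
  rw [Finset.prod_div_distrib, Finset.prod_div_distrib] at hprod
  have hPV : (∏ r ∈ T, DD hc (arv g A hA) (g v) (wvec g hc A hA u0 v0 r)) ≠ 0 :=
    Finset.prod_ne_zero_iff.2 hTv
  have hQV : (∏ s ∈ S', DD hc (arv g A hA) (g v) (g s)) ≠ 0 :=
    Finset.prod_ne_zero_iff.2 hSv
  field_simp at hprod
  linear_combination hprod


lemma fA_mem_gen :
    (fun v => ∏ r ∈ TSet g hc A hA u0 v0, DD hc (arv g A hA) v (wvec g hc A hA u0 v0 r))
      ∈ GenSet g hc A hA (TSet g hc A hA u0 v0).card := by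
  refine ⟨(TSet g hc A hA u0 v0).val.map (wvec g hc A hA u0 v0), by simp, ?_⟩
  funext v
  rw [Multiset.map_map]
  rfl

omit hG hu0 hv0 huv0 in
lemma TSet_card (t : ℕ) (ht : m + t = Fintype.card F + k - 1) (hm : k ≤ m)
    (hinjσ : ∀ s ∈ Finset.univ \ A, ∀ s' ∈ Finset.univ \ A,
      sigmaT g hc A hA u0 v0 s = sigmaT g hc A hA u0 v0 s' → s = s') :
    (TSet g hc A hA u0 v0).card = t := by
  have hq1 : 1 ≤ Fintype.card F := Fintype.card_pos
  have hUA : (Finset.univ \ A).card = m - c := by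
    rw [Finset.card_sdiff_of_subset (Finset.subset_univ A), Finset.card_univ, Fintype.card_fin, hA]
  have himsub : Finset.image (sigmaT g hc A hA u0 v0) (Finset.univ \ A)
      ⊆ (RSet : Finset (F × F)) := by
    intro r hr
    obtain ⟨s, _, rfl⟩ := Finset.mem_image.1 hr
    exact normPair_mem_RSet _
  have himcard : (Finset.image (sigmaT g hc A hA u0 v0) (Finset.univ \ A)).card = m - c := by
    rw [Finset.card_image_of_injOn hinjσ, hUA]
  rw [TSet, Finset.card_sdiff_of_subset himsub, card_RSet, himcard]
  omega

lemma Phi_const (t : ℕ) (ht : m + t = Fintype.card F + k - 1)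
    {u v : Fin m} (hu : u ∉ A) (hv : v ∉ A) (huv : u ≠ v) :
    (∏ r ∈ TSet g hc A hA u0 v0, DD hc (arv g A hA) (g u) (wvec g hc A hA u0 v0 r))
      * ∏ s ∈ (Finset.univ \ A).erase u, DD hc (arv g A hA) (g u) (g s)
    = (∏ r ∈ TSet g hc A hA u0 v0, DD hc (arv g A hA) (g v) (wvec g hc A hA u0 v0 r))
      * ∏ s ∈ (Finset.univ \ A).erase v, DD hc (arv g A hA) (g v) (g s) := by
  have hstar := star_eq g hG hc A hA u0 v0 hu0 hv0 huv0 t ht hu hv huv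
  have hvmem : v ∈ (Finset.univ \ A).erase u :=
    Finset.mem_erase.2 ⟨huv.symm, Finset.mem_sdiff.2 ⟨Finset.mem_univ _, hv⟩⟩
  have humem : u ∈ (Finset.univ \ A).erase v :=
    Finset.mem_erase.2 ⟨huv, Finset.mem_sdiff.2 ⟨Finset.mem_univ _, hu⟩⟩
  have h1 : ∏ s ∈ (Finset.univ \ A).erase u, DD hc (arv g A hA) (g u) (g s)
      = DD hc (arv g A hA) (g u) (g v)
        * ∏ s ∈ ((Finset.univ \ A).erase u).erase v, DD hc (arv g A hA) (g u) (g s) :=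
    (Finset.mul_prod_erase _ _ hvmem).symm
  have h2 : ∏ s ∈ (Finset.univ \ A).erase v, DD hc (arv g A hA) (g v) (g s)
      = DD hc (arv g A hA) (g v) (g u)
        * ∏ s ∈ ((Finset.univ \ A).erase u).erase v, DD hc (arv g A hA) (g v) (g s) := by
    rw [Finset.erase_right_comm]
    exact (Finset.mul_prod_erase _ _ humem).symm
  rw [h1, h2, DD_swap hc (arv g A hA) (g v) (g u)]
  linear_combination DD hc (arv g A hA) (g u) (g v) * hstar

lemma Phi_ne_zero {u : Fin m} (hu : u ∉ A) :
    (∏ r ∈ TSet g hc A hA u0 v0, DD hc (arv g A hA) (g u) (wvec g hc A hA u0 v0 r))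
      * ∏ s ∈ (Finset.univ \ A).erase u, DD hc (arv g A hA) (g u) (g s) ≠ 0 := by
  apply mul_ne_zero
  · exact Finset.prod_ne_zero_iff.2
      (fun r hr => tangency g hG hc A hA u0 v0 hu0 hv0 huv0 hr hu)
  · refine Finset.prod_ne_zero_iff.2 (fun s hs => ?_)
    have hsu := Finset.ne_of_mem_erase hs
    have hsA := (Finset.mem_sdiff.1 (Finset.mem_of_mem_erase hs)).2
    exact DDg_ne_zero g hG hc A hA hu hsA (fun h => hsu h.symm)

end Tangent

section Eps
variable {m : ℕ} (g : Fin m ↪ (Fin k → F)) (hG : IsArc (Set.range ⇑g))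
  {c : ℕ} (hc : c + 1 + 1 = k) (A : Finset (Fin m)) (hA : A.card = c)

include hG hc in
lemma eps_exists (e : Fin m) (he : e ∉ A) (hm2 : c + 1 < m) :
    ∃ ε : F, ε * ε = 1 ∧ ∀ x : Fin m,
      detWith (⇑g) (g x) (insert e A) = ε * DD hc (arv g A hA) (g e) (g x) := by
  classical
  have hCcard : (insert e A).card = c + 1 := by
    rw [Finset.card_insert_of_notMem he, hA]
  have hCk : (insert e A).card + 1 = k := by rw [hCcard]; exact hc
  set ocIdx : Fin (insert e A).card → Fin m := ⇑((insert e A).orderEmbOfFin rfl) with hoc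
  have hrangeoc : Set.range ocIdx = ↑(insert e A) := Finset.range_orderEmbOfFin _ rfl
  have hocmem : ∀ j, ocIdx j ∈ insert e A := fun j => Finset.orderEmbOfFin_mem _ rfl j
  -- a point outside C
  have hne : (Finset.univ \ insert e A).Nonempty := by
    apply Finset.card_pos.1
    rw [Finset.card_sdiff_of_subset (Finset.subset_univ _), Finset.card_univ, Fintype.card_fin, hCcard]
    omega
  obtain ⟨x0, hx0⟩ := hne
  have hx0C : x0 ∉ insert e A := (Finset.mem_sdiff.1 hx0).2
  have hx0A : x0 ∉ A := fun h => hx0C (Finset.mem_insert_of_mem h)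
  have hex0 : e ≠ x0 := fun h => hx0C (h ▸ Finset.mem_insert_self e A)
  have hdw : ∀ u : Fin k → F, detWith (⇑g) u (insert e A) = rdet hCk u (⇑g ∘ ocIdx) := by
    intro u
    rw [detWith, dif_pos hCk]
    rfl
  have hD : DD hc (arv g A hA) (g e) (g x0) ≠ 0 := DDg_ne_zero g hG hc A hA he hx0A hex0
  set ε := rdet hCk (g x0) (⇑g ∘ ocIdx) / DD hc (arv g A hA) (g e) (g x0) with hε
  -- injectivity of the two index tuples
  have hw1inj : Function.Injective ((Fin.cons x0 ocIdx) ∘ Fin.cast hCk.symm) := by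
    refine cast_comp_inj hCk _ ?_
    rw [Fin.cons_injective_iff]
    refine ⟨fun hmem => ?_, ((insert e A).orderEmbOfFin rfl).injective⟩
    rw [hrangeoc] at hmem
    exact hx0C hmem
  have hw2inj : Function.Injective
      ((Fin.cons e (Fin.cons x0 (oaf A hA))) ∘ Fin.cast hc.symm) :=
    cast_comp_inj hc _ (cons2_inj A hA he hx0A hex0)
  -- the linear form identity
  have hγ : rform hCk (⇑g ∘ ocIdx) - ε • Dsnd hc (arv g A hA) (g e) = 0 := by
    apply form_eq_zero g hG _ hw1inj
    intro i
    obtain ⟨j, rfl⟩ := cast_surj hCk i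
    rw [Function.comp_apply]
    have hr := row_apply hCk x0 ocIdx j
    rw [Function.comp_apply] at hr
    rw [hr]
    simp only [LinearMap.sub_apply, LinearMap.smul_apply, rform_apply, Dsnd_apply, smul_eq_mul]
    induction j using Fin.cases with
    | zero =>
        rw [Fin.cons_zero, hε, div_mul_cancel₀ _ hD, sub_self]
    | succ j =>
        rw [Fin.cons_succ]
        rw [rdet_eq_zero_of_eq hCk (g (ocIdx j)) (⇑g ∘ ocIdx) j rfl]
        rcases Finset.mem_insert.1 (hocmem j) with hje | hjA
        · rw [hje, DD_self, mul_zero, sub_zero]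
        · obtain ⟨j', hj'⟩ := (mem_iff_oaf A hA).1 hjA
          have : DD hc (arv g A hA) (g e) (g (ocIdx j)) = 0 := by
            rw [← hj']
            exact DD_ar_right hc (arv g A hA) j' (g e)
          rw [this, mul_zero, sub_zero]
  -- the permutation sign
  have hrange : Set.range ((Fin.cons x0 ocIdx) ∘ Fin.cast hCk.symm)
      = Set.range ((Fin.cons e (Fin.cons x0 (oaf A hA))) ∘ Fin.cast hc.symm) := by
    have hsurj1 : Function.Surjective (Fin.cast hCk.symm) :=
      fun i => ⟨Fin.cast hCk i, by ext; simp⟩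
    have hsurj2 : Function.Surjective (Fin.cast hc.symm) :=
      fun i => ⟨Fin.cast hc i, by ext; simp⟩
    rw [Function.Surjective.range_comp hsurj1, Function.Surjective.range_comp hsurj2,
      Fin.range_cons, Fin.range_cons, Fin.range_cons, hrangeoc, range_oaf A hA]
    rw [Finset.coe_insert]
    exact Set.insert_comm x0 e ↑A
  set w1 := (Fin.cons x0 ocIdx) ∘ Fin.cast hCk.symm with hw1
  set w2 := (Fin.cons e (Fin.cons x0 (oaf A hA))) ∘ Fin.cast hc.symm with hw2
  set σ : Fin k ≃ Fin k :=
    (Equiv.ofInjective w1 hw1inj).trans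
      ((Equiv.setCongr hrange).trans (Equiv.ofInjective w2 hw2inj).symm) with hσdef
  have hσ : ∀ i, w2 (σ i) = w1 i := by
    intro i
    show w2 ((Equiv.ofInjective w2 hw2inj).symm
      (Equiv.setCongr hrange (Equiv.ofInjective w1 hw1inj i))) = w1 i
    rw [Equiv.apply_ofInjective_symm hw2inj]
    rfl
  have h1 : rdet hCk (g x0) (⇑g ∘ ocIdx) = Matrix.det (Matrix.of (⇑g ∘ w1)) :=
    rdet_comp g hCk x0 ocIdx
  have h2 : DD hc (arv g A hA) (g e) (g x0) = Matrix.det (Matrix.of (⇑g ∘ w2)) := by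
    rw [DD, arv, ← Fin.comp_cons]
    exact rdet_comp g hc e (Fin.cons x0 (oaf A hA))
  have hMeq : Matrix.of (⇑g ∘ w1) = (Matrix.of (⇑g ∘ w2)).submatrix (⇑σ) id := by
    ext i j
    rw [Matrix.submatrix_apply, Matrix.of_apply, Matrix.of_apply, Function.comp_apply,
      Function.comp_apply, hσ i]
    rfl
  have hdet2 : Matrix.det (Matrix.of (⇑g ∘ w2)) ≠ 0 := arc_det_ne_zero g hG _ hw2inj
  have hεv : ε = ((Equiv.Perm.sign σ : ℤ) : F) := by
    rw [hε, h1, h2, hMeq, Matrix.det_permute, mul_div_assoc, div_self hdet2, mul_one]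
  refine ⟨ε, ?_, ?_⟩
  · rw [hεv]
    have hs := Int.units_mul_self (Equiv.Perm.sign σ)
    have hcast : ((Equiv.Perm.sign σ : ℤ) : F) * ((Equiv.Perm.sign σ : ℤ) : F)
        = (((Equiv.Perm.sign σ * Equiv.Perm.sign σ : ℤˣ) : ℤ) : F) := by push_cast; ring
    rw [hcast, hs]
    simp
  · intro x
    have hx := LinearMap.congr_fun hγ (g x)
    simp only [LinearMap.sub_apply, LinearMap.smul_apply, rform_apply, Dsnd_apply,
      smul_eq_mul, LinearMap.zero_apply] at hx
    rw [hdw]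
    linear_combination hx

end Eps

lemma eps_pow [Fintype F] (ε : F) (hε : ε * ε = 1) (n : ℕ)
    (hn : ringChar F ≠ 2 → Even n) : ε ^ n = 1 := by
  rcases mul_self_eq_one_iff.1 hε with rfl | rfl
  · exact one_pow n
  · by_cases hch : ringChar F = 2
    · have h2 : (2 : F) = 0 := by
        have := (ringChar.spec F 2).2 (by rw [hch])
        exact_mod_cast this
      have hneg : (-1 : F) = 1 := by linear_combination -h2
      rw [hneg, one_pow]
    · exact Even.neg_one_pow (hn hch)

end S7

theorem stmt7' {F : Type*} [Field F] [Fintype F] {k m t : ℕ} (hk : 3 ≤ k)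
    (g : Fin m ↪ (Fin k → F)) (hG : IsArc (Set.range ⇑g)) (hm : k ≤ m)
    (ht : m + t = Fintype.card F + k - 1) :
    ∃ c : Finset (Fin m) → F,
      (∀ C : Finset (Fin m), C.card = k - 1 → c C ≠ 0) ∧
      ∀ E : Finset (Fin m), E.card = k + t →
        ∀ A : Finset (Fin m), A ⊆ E → A.card = k - 2 →
          ∑ C ∈ (E.powersetCard (k - 1)).filter (fun C => A ⊆ C),
            c C * ∏ u ∈ E \ C, (detWith (⇑g) (g u) C)⁻¹ = 0 := by
  classical
  obtain ⟨c, hc⟩ : ∃ c, c + 1 + 1 = k := ⟨k - 2, by omega⟩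
  have hq1 : 1 ≤ Fintype.card F := Fintype.card_pos
  refine ⟨fun C => ∏ s ∈ Finset.univ \ C, (detWith (⇑g) (g s) C)⁻¹, ?_, ?_⟩
  · -- nonvanishing
    intro C hCcard
    refine Finset.prod_ne_zero_iff.2 (fun s hs => inv_ne_zero ?_)
    have hCk : C.card + 1 = k := by omega
    have hdw : detWith (⇑g) (g s) C = S7.rdet hCk (g s) (⇑g ∘ ⇑(C.orderEmbOfFin rfl)) := by
      rw [detWith, dif_pos hCk]; rfl
    rw [hdw]
    apply S7.rdet_arc_ne_zero g hG
    rw [Fin.cons_injective_iff]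
    constructor
    · rw [Finset.range_orderEmbOfFin]
      exact fun hmem => (Finset.mem_sdiff.1 hs).2 hmem
    · exact (C.orderEmbOfFin rfl).injective
  · intro E hE A hAE hAcard
    have hc2 : A.card = c := by omega
    have hkm : k + t ≤ m := by
      have := Finset.card_le_card (Finset.subset_univ E)
      rw [hE, Finset.card_univ, Fintype.card_fin] at this
      exact this
    -- choose the two reference points
    have h2lt : 1 < (Finset.univ \ A).card := by
      rw [Finset.card_sdiff_of_subset (Finset.subset_univ A), Finset.card_univ, Fintype.card_fin, hAcard]
      omega
    obtain ⟨u0, hu0m, v0, hv0m, huv0⟩ := Finset.one_lt_card.1 h2lt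
    have hu0 : u0 ∉ A := (Finset.mem_sdiff.1 hu0m).2
    have hv0 : v0 ∉ A := (Finset.mem_sdiff.1 hv0m).2
    have hinjσ : ∀ s ∈ Finset.univ \ A, ∀ s' ∈ Finset.univ \ A,
        S7.sigmaT g hc A hc2 u0 v0 s = S7.sigmaT g hc A hc2 u0 v0 s' → s = s' :=
      fun s hs s' hs' hss => S7.sigma_injOn g hG hc A hc2 u0 v0 hu0 hv0 huv0
        (Finset.mem_sdiff.1 hs).2 (Finset.mem_sdiff.1 hs').2 hss
    have hTc : (S7.TSet g hc A hc2 u0 v0).card = t :=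
      S7.TSet_card g hc A hc2 u0 v0 t ht hm hinjσ
    -- base point of E \ A
    have hEAcard : (E \ A).card = t + 2 := by
      rw [Finset.card_sdiff_of_subset hAE, hE, hAcard]
      omega
    obtain ⟨e0, he0⟩ : (E \ A).Nonempty := Finset.card_pos.1 (by omega)
    have he0A : e0 ∉ A := (Finset.mem_sdiff.1 he0).2
    set Φ : F := (∏ r ∈ S7.TSet g hc A hc2 u0 v0,
        S7.DD hc (S7.arv g A hc2) (g e0) (S7.wvec g hc A hc2 u0 v0 r))
      * ∏ s ∈ (Finset.univ \ A).erase e0, S7.DD hc (S7.arv g A hc2) (g e0) (g s) with hΦdef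
    have hΦne : Φ ≠ 0 :=
      S7.Phi_ne_zero g hG hc A hc2 u0 v0 hu0 hv0 huv0 he0A
    -- reindex the sum
    have hset : (E.powersetCard (k - 1)).filter (fun C => A ⊆ C)
        = (E \ A).image (fun e => insert e A) := by
      ext C
      simp only [Finset.mem_filter, Finset.mem_powersetCard, Finset.mem_image]
      constructor
      · rintro ⟨⟨hCE, hCcard⟩, hAC⟩
        have hCA1 : (C \ A).card = 1 := by
          rw [Finset.card_sdiff_of_subset hAC, hCcard, hAcard]
          omega
        obtain ⟨e, hesing⟩ := Finset.card_eq_one.1 hCA1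
        have heCA : e ∈ C \ A := hesing ▸ Finset.mem_singleton_self e
        refine ⟨e, Finset.mem_sdiff.2 ⟨hCE (Finset.mem_sdiff.1 heCA).1,
          (Finset.mem_sdiff.1 heCA).2⟩, ?_⟩
        have hCu : C = A ∪ (C \ A) := (Finset.union_sdiff_of_subset hAC).symm
        rw [hesing] at hCu
        rw [hCu, Finset.union_comm]
        rfl
      · rintro ⟨e, he, rfl⟩
        have heE := (Finset.mem_sdiff.1 he).1
        have heA := (Finset.mem_sdiff.1 he).2
        refine ⟨⟨Finset.insert_subset heE hAE, ?_⟩, Finset.subset_insert e A⟩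
        rw [Finset.card_insert_of_notMem heA, hAcard]
        omega
    have hinjins : ∀ x ∈ E \ A, ∀ y ∈ E \ A,
        (fun e => insert e A) x = (fun e => insert e A) y → x = y := by
      intro x hx y hy hxy
      simp only at hxy
      have hxA := (Finset.mem_sdiff.1 hx).2
      have : x ∈ insert y A := hxy ▸ Finset.mem_insert_self x A
      rcases Finset.mem_insert.1 this with h | h
      · exact h
      · exact absurd h hxA
    rw [hset, Finset.sum_image hinjins]
    -- transform each term
    have hterm : ∀ e ∈ E \ A,
        (∏ s ∈ Finset.univ \ insert e A, (detWith (⇑g) (g s) (insert e A))⁻¹)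
          * ∏ u ∈ E \ insert e A, (detWith (⇑g) (g u) (insert e A))⁻¹
        = Φ⁻¹ * ((∏ r ∈ S7.TSet g hc A hc2 u0 v0,
            S7.DD hc (S7.arv g A hc2) (g e) (S7.wvec g hc A hc2 u0 v0 r))
          * ∏ u ∈ (E \ A).erase e, (S7.DD hc (S7.arv g A hc2) (g e) (g u))⁻¹) := by
      intro e he
      have heE := (Finset.mem_sdiff.1 he).1
      have heA := (Finset.mem_sdiff.1 he).2
      obtain ⟨ε, hε2, hεe⟩ := S7.eps_exists g hG hc A hc2 e heA (by omega)
      have hinv : ε⁻¹ = ε := inv_eq_of_mul_eq_one_right hε2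
      have hCeq : E \ insert e A = (E \ A).erase e := by
        ext x
        simp only [Finset.mem_sdiff, Finset.mem_erase, Finset.mem_insert, not_or]
        tauto
      have hsplit1 : Finset.univ \ insert e A = (Finset.univ \ E) ∪ (E \ insert e A) := by
        ext x
        simp only [Finset.mem_sdiff, Finset.mem_union, Finset.mem_univ, true_and,
          Finset.mem_insert, not_or]
        constructor
        · rintro ⟨hxe, hxA⟩
          by_cases hxE : x ∈ E
          · exact Or.inr ⟨hxE, hxe, hxA⟩
          · exact Or.inl hxE
        · rintro (hxE | ⟨hxE, hxe, hxA⟩)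
          · exact ⟨fun h => hxE (h ▸ heE), fun h => hxE (hAE h)⟩
          · exact ⟨hxe, hxA⟩
      have hdisj : Disjoint (Finset.univ \ E) (E \ insert e A) := by
        rw [Finset.disjoint_left]
        intro x hx hx2
        exact (Finset.mem_sdiff.1 hx).2 (Finset.mem_sdiff.1 hx2).1
      have hfac : ∀ S : Finset (Fin m),
          ∏ s ∈ S, (detWith (⇑g) (g s) (insert e A))⁻¹
          = ε ^ S.card * ∏ s ∈ S, (S7.DD hc (S7.arv g A hc2) (g e) (g s))⁻¹ := by
        intro S
        rw [← Finset.prod_const ε, ← Finset.prod_mul_distrib]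
        refine Finset.prod_congr rfl (fun s _ => ?_)
        rw [hεe s, mul_inv, hinv]
      rw [hsplit1, Finset.prod_union hdisj, hCeq, hfac, hfac]
      have hN1 : ε ^ (Finset.univ \ E).card = 1 := by
        apply S7.eps_pow ε hε2
        intro hch
        have hodd := FiniteField.odd_card_of_char_ne_two hch
        rw [Finset.card_sdiff_of_subset (Finset.subset_univ E), Finset.card_univ, Fintype.card_fin, hE,
          Nat.even_iff]
        omega
      rw [hN1, one_mul]
      -- combine the two ε ^ N2 into 1
      have hN2 : ε ^ ((E \ A).erase e).card * ε ^ ((E \ A).erase e).card = 1 := by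
        rw [← mul_pow, hε2, one_pow]
      -- the product over (univ \ A).erase e
      have hsplit2 : (Finset.univ \ A).erase e = (Finset.univ \ E) ∪ ((E \ A).erase e) := by
        ext x
        simp only [Finset.mem_erase, Finset.mem_sdiff, Finset.mem_union, Finset.mem_univ,
          true_and]
        constructor
        · rintro ⟨hxe, hxA⟩
          by_cases hxE : x ∈ E
          · exact Or.inr ⟨hxe, hxE, hxA⟩
          · exact Or.inl hxE
        · rintro (hxE | ⟨hxe, hxE, hxA⟩)
          · exact ⟨fun h => hxE (h ▸ heE), fun h => hxE (hAE h)⟩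
          · exact ⟨hxe, hxA⟩
      have hdisj2 : Disjoint (Finset.univ \ E) ((E \ A).erase e) := by
        rw [Finset.disjoint_left]
        intro x hx hx2
        exact (Finset.mem_sdiff.1 hx).2 (Finset.mem_sdiff.1 (Finset.mem_of_mem_erase hx2)).1
      have hQ : (∏ s ∈ (Finset.univ \ A).erase e, S7.DD hc (S7.arv g A hc2) (g e) (g s))⁻¹
          = (∏ s ∈ Finset.univ \ E, (S7.DD hc (S7.arv g A hc2) (g e) (g s))⁻¹)
            * ∏ s ∈ (E \ A).erase e, (S7.DD hc (S7.arv g A hc2) (g e) (g s))⁻¹ := by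
        rw [hsplit2, Finset.prod_union hdisj2, mul_inv, Finset.prod_inv_distrib,
          Finset.prod_inv_distrib]
      have hΦe : Φ = (∏ r ∈ S7.TSet g hc A hc2 u0 v0,
          S7.DD hc (S7.arv g A hc2) (g e) (S7.wvec g hc A hc2 u0 v0 r))
          * ∏ s ∈ (Finset.univ \ A).erase e, S7.DD hc (S7.arv g A hc2) (g e) (g s) := by
        rcases eq_or_ne e0 e with rfl | hne
        · exact hΦdef
        · exact S7.Phi_const g hG hc A hc2 u0 v0 hu0 hv0 huv0 t ht he0A heA hne
      have hfAe : (∏ r ∈ S7.TSet g hc A hc2 u0 v0,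
          S7.DD hc (S7.arv g A hc2) (g e) (S7.wvec g hc A hc2 u0 v0 r)) ≠ 0 :=
        Finset.prod_ne_zero_iff.2
          (fun r hr => S7.tangency g hG hc A hc2 u0 v0 hu0 hv0 huv0 hr heA)
      have hQne : (∏ s ∈ (Finset.univ \ A).erase e,
          S7.DD hc (S7.arv g A hc2) (g e) (g s)) ≠ 0 := by
        refine Finset.prod_ne_zero_iff.2 (fun s hs => ?_)
        have hse := Finset.ne_of_mem_erase hs
        have hsA := (Finset.mem_sdiff.1 (Finset.mem_of_mem_erase hs)).2
        exact S7.DDg_ne_zero g hG hc A hc2 heA hsA (fun h => hse h.symm)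
      rw [hΦe, mul_inv, hQ]
      set P1 := ∏ s ∈ Finset.univ \ E, (S7.DD hc (S7.arv g A hc2) (g e) (g s))⁻¹ with hP1
      set P2 := ∏ s ∈ (E \ A).erase e, (S7.DD hc (S7.arv g A hc2) (g e) (g s))⁻¹ with hP2
      set fAe := ∏ r ∈ S7.TSet g hc A hc2 u0 v0,
        S7.DD hc (S7.arv g A hc2) (g e) (S7.wvec g hc A hc2 u0 v0 r) with hfAedef
      have key : fAe⁻¹ * fAe = 1 := inv_mul_cancel₀ hfAe
      linear_combination (P1 * P2 * P2) * hN2 - (P1 * P2 * P2) * key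
    rw [Finset.sum_congr rfl (fun e he => by rw [hterm e he])]
    rw [← Finset.mul_sum]
    have hfmem : (fun v => ∏ r ∈ S7.TSet g hc A hc2 u0 v0,
        S7.DD hc (S7.arv g A hc2) v (S7.wvec g hc A hc2 u0 v0 r))
        ∈ Submodule.span F (S7.GenSet g hc A hc2 t) := by
      have := Submodule.subset_span (R := F)
        (s := S7.GenSet g hc A hc2 (S7.TSet g hc A hc2 u0 v0).card)
        (S7.fA_mem_gen g hG hc A hc2 u0 v0 hu0 hv0 huv0)
      rw [hTc] at this
      exact this
    have hzero := S7.step1 g hG hc A hc2 t (E \ A)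
      (fun x hx => (Finset.mem_sdiff.1 hx).2) hEAcard _ hfmem
    rw [hzero, mul_zero]

theorem stmt7 [Fintype F] {k m t : ℕ} (hk : 3 ≤ k)
    (g : Fin m ↪ (Fin k → F)) (hG : IsArc (Set.range g)) (hm : k ≤ m)
    (ht : m + t = Fintype.card F + k - 1) :
    ∃ c : Finset (Fin m) → F,
      (∀ C : Finset (Fin m), C.card = k - 1 → c C ≠ 0) ∧
      ∀ E : Finset (Fin m), E.card = k + t →
        ∀ A : Finset (Fin m), A ⊆ E → A.card = k - 2 →
          ∑ C ∈ (E.powersetCard (k - 1)).filter (fun C => A ⊆ C),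
            c C * ∏ u ∈ E \ C, (detWith (⇑g) (g u) C)⁻¹ = 0 := by
  exact stmt7' hk g hG hm ht
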